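/- For all integers m ≥ 1 and n ≥ 1, the following identity holds in ℂ: (−1)^{mn} · 2^m · ∏_{h=1}^{m} T_{2n}(i·cos((2h−1)π/(4m))) = ∏_{h=1}^{m} ∏_{k=1}^{n} (4·cos²((2h−1)π/(4m)) + 4·cos²((2k−1)π/(4n))), where i is the imaginary unit and the right-hand side is a real number regarded as a complex number. -/

import Mathlib

open Real Polynomial

lemma cheb_aux_t1 (n : ℕ) (hn : 1 ≤ n) (w : ℂ) :
    ∏ i ∈ Finset.range (2 * n),
      (w + Complex.exp ((2 * i + 1) * π * Complex.I / (2 * n))) = w ^ (2 * n) + 1 := by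
  have hn0 : (n : ℂ) ≠ 0 := Nat.cast_ne_zero.mpr (by omega)
  have hζ := Complex.isPrimitiveRoot_exp (2 * n) (by omega)
  have e : (Complex.exp (2 * π * Complex.I / (2 * n : ℕ) / 2)) ^ (2 * n) = -1 := by
    rw [← Complex.exp_nat_mul,
      show ((2 * n : ℕ) : ℂ) * (2 * π * Complex.I / (2 * n : ℕ) / 2) = π * Complex.I by
        push_cast; field_simp]
    exact Complex.exp_pi_mul_I
  have h := congrArg (Polynomial.eval (-w)) (X_pow_sub_C_eq_prod hζ (by omega) e)
  simp only [eval_sub, eval_pow, eval_X, eval_C, eval_prod] at h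
  rw [show ((-w) ^ (2*n) - (-1 : ℂ)) = w ^ (2*n) + 1 by
    rw [(Even.neg_pow ⟨n, by ring⟩ w : (-w)^(2*n) = w^(2*n))]; ring] at h
  rw [h]
  have key : ∀ i ∈ Finset.range (2 * n),
      -w - Complex.exp (2 * π * Complex.I / (2 * n : ℕ)) ^ i
             * Complex.exp (2 * π * Complex.I / (2 * n : ℕ) / 2)
      = (-1) * (w + Complex.exp ((2 * i + 1) * π * Complex.I / (2 * n))) := by
    intro i _
    rw [← Complex.exp_nat_mul, ← Complex.exp_add,
      congrArg Complex.exp (show (i : ℂ) * (2 * π * Complex.I / (2 * n : ℕ))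
          + 2 * π * Complex.I / (2 * n : ℕ) / 2
        = (2 * i + 1) * π * Complex.I / (2 * n) by push_cast; field_simp)]
    ring
  rw [Finset.prod_congr rfl key, Finset.prod_mul_distrib, Finset.prod_const,
    Finset.card_range, (Even.neg_one_pow ⟨n, by ring⟩ : (-1:ℂ)^(2*n) = 1), one_mul]

lemma cheb_aux_habc (E C S : ℂ) (hE : E ≠ 0) (h1 : S ^ 2 + C ^ 2 = 1) :
    E + E⁻¹ + 2 * C = E⁻¹ * ((E + (C + S * Complex.I)) * (E + (C + -S * Complex.I))) := by
  have expand : (E + (C + S * Complex.I)) * (E + (C + -S * Complex.I))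
      = E ^ 2 + 2 * C * E + 1 := by
    linear_combination h1 - S ^ 2 * Complex.I_sq
  rw [expand]
  field_simp
  ring

lemma cheb_aux_t2 (n : ℕ) (hn : 1 ≤ n) (c : ℝ) :
    (-1 : ℂ) ^ n * 2 * (Polynomial.Chebyshev.T ℂ (2 * n)).eval (Complex.I * (c : ℂ)) =
    ∏ k ∈ Finset.Icc 1 n,
      ((4 * c ^ 2 + 4 * Real.cos ((2 * k - 1) * π / (4 * n)) ^ 2 : ℝ) : ℂ) := by
  have hnR : (n : ℝ) ≠ 0 := Nat.cast_ne_zero.mpr (by omega)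
  have hnC : (n : ℂ) ≠ 0 := Nat.cast_ne_zero.mpr (by omega)
  set t : ℝ := Real.arsinh c with ht
  set W : ℂ := ((Real.exp (2 * t) : ℝ) : ℂ) with hW
  have hWE : W = Complex.exp (((2 * t : ℝ) : ℂ)) := by rw [hW]; push_cast; ring
  have hW0 : W ≠ 0 := by rw [hWE]; exact Complex.exp_ne_zero _
  have hcos : Complex.I * (c : ℂ) = Complex.cos ((π / 2 : ℝ) - (t : ℂ) * Complex.I) := by
    rw [show ((π / 2 : ℝ) : ℂ) - (t : ℂ) * Complex.I = (π : ℂ) / 2 - (t : ℂ) * Complex.I by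
      push_cast; ring]
    rw [Complex.cos_pi_div_two_sub, Complex.sin_mul_I, ← Complex.ofReal_sinh, ht,
      Real.sinh_arsinh]
    ring
  have hA : (Polynomial.Chebyshev.T ℂ (2 * n)).eval (Complex.I * (c : ℂ))
      = (-1 : ℂ) ^ n * ((W ^ n + (W⁻¹) ^ n) / 2) := by
    rw [hcos, Polynomial.Chebyshev.T_complex_cos]
    rw [show ((2 * (n : ℤ) : ℤ) : ℂ) * (((π / 2 : ℝ) : ℂ) - (t : ℂ) * Complex.I)
        = ((n * π : ℝ) : ℂ) - ((2 * n * t : ℝ) : ℂ) * Complex.I by push_cast; ring]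
    rw [Complex.cos_sub, Complex.cos_mul_I, ← Complex.ofReal_cos, ← Complex.ofReal_sin,
      Real.sin_nat_mul_pi]
    have hcn : Real.cos ((n : ℝ) * π) = (-1) ^ n := by
      have := Real.cos_nat_mul_pi_sub 0 n
      simpa using this
    rw [hcn, ← Complex.ofReal_cosh]
    have hch : Real.cosh (2 * n * t) = (Real.exp (2*t) ^ n + (Real.exp (2*t))⁻¹ ^ n) / 2 := by
      rw [Real.cosh_eq, show (2 : ℝ) * n * t = n * (2 * t) by ring, Real.exp_nat_mul,
        ← Real.exp_neg, show (-(n * (2*t)) : ℝ) = n * (-(2*t)) by ring, Real.exp_nat_mul,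
        Real.exp_neg]
    rw [hch, hW]
    push_cast
    ring
  rw [hA]
  rw [← Finset.Ico_add_one_right_eq_Icc, Finset.prod_Ico_eq_prod_range]
  simp only [Nat.add_sub_cancel]
  have key : ∀ i ∈ Finset.range n,
      ((4 * c ^ 2 + 4 * Real.cos ((2 * (1 + i : ℕ) - 1) * π / (4 * n)) ^ 2 : ℝ) : ℂ)
      = W⁻¹ * ((W + Complex.exp ((2 * i + 1) * π * Complex.I / (2 * n)))
          * (W + Complex.exp (-((2 * i + 1) * π * Complex.I / (2 * n))))) := by
    intro i _
    set θ : ℝ := (2 * (1 + i : ℕ) - 1) * π / (4 * n) with hθ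
    set φ : ℝ := (2 * i + 1) * π / (2 * n) with hφ
    have hexp : (2 * (i : ℂ) + 1) * π * Complex.I / (2 * n) = (φ : ℂ) * Complex.I := by
      rw [hφ]; push_cast; field_simp
    have hreal : 4 * c ^ 2 + 4 * Real.cos θ ^ 2
        = Real.exp (2*t) + (Real.exp (2*t))⁻¹ + 2 * Real.cos φ := by
      have h1 : Real.exp (2*t) + (Real.exp (2*t))⁻¹ = 4 * c ^ 2 + 2 := by
        rw [← Real.exp_neg]
        have h2 : Real.cosh (2*t) = 2 * Real.sinh t ^ 2 + 1 := by
          rw [Real.cosh_two_mul, Real.cosh_sq]; ring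
        have h3 : Real.exp (2*t) + Real.exp (-(2*t)) = 2 * Real.cosh (2*t) := by
          rw [Real.cosh_eq]; ring
        rw [h3, h2, ht, Real.sinh_arsinh]; ring
      have h4 : φ = 2 * θ := by
        rw [hφ, hθ]; push_cast; field_simp; ring
      rw [h1, h4, Real.cos_two_mul]; ring
    rw [show ((4 * c ^ 2 + 4 * Real.cos θ ^ 2 : ℝ) : ℂ)
        = Complex.exp (((2*t : ℝ) : ℂ)) + (Complex.exp (((2*t : ℝ) : ℂ)))⁻¹
          + 2 * Complex.cos ((φ : ℝ) : ℂ) by rw [hreal]; push_cast; ring]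
    rw [hexp, ← neg_mul, Complex.exp_mul_I, Complex.exp_mul_I, Complex.cos_neg,
      Complex.sin_neg, hWE]
    exact cheb_aux_habc _ _ _ (Complex.exp_ne_zero _) (Complex.sin_sq_add_cos_sq _)
  rw [Finset.prod_congr rfl key]
  rw [Finset.prod_mul_distrib, Finset.prod_mul_distrib, Finset.prod_const, Finset.card_range]
  have hg : ∏ i ∈ Finset.range n, (W + Complex.exp (-((2 * i + 1) * π * Complex.I / (2 * n))))
      = ∏ i ∈ Finset.range n,
          (W + Complex.exp ((2 * ((n + i : ℕ) : ℂ) + 1) * π * Complex.I / (2 * n))) := by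
    rw [← Finset.prod_range_reflect
      (fun i => W + Complex.exp ((2 * ((n + i : ℕ) : ℂ) + 1) * π * Complex.I / (2 * n))) n]
    apply Finset.prod_congr rfl
    intro j hj
    simp only [Finset.mem_range] at hj
    have hxC : ((n + (n - 1 - j) : ℕ) : ℂ) = 2 * n - j - 1 := by
      rw [show n + (n - 1 - j) = 2 * n - (j + 1) by omega, Nat.cast_sub (by omega)]
      push_cast; ring
    rw [congrArg Complex.exp
      (show (2 * ((n + (n - 1 - j) : ℕ) : ℂ) + 1) * π * Complex.I / (2 * n)
        = -((2 * j + 1) * π * Complex.I / (2 * n)) + 2 * π * Complex.I by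
          rw [hxC]; field_simp; ring)]
    rw [Complex.exp_add, Complex.exp_two_pi_mul_I, mul_one]
  have t1' := cheb_aux_t1 n hn W
  rw [show 2 * n = n + n by ring, Finset.prod_range_add] at t1'
  rw [hg]
  push_cast at t1' ⊢
  rw [t1']
  have hsign : (-1 : ℂ) ^ n * (-1 : ℂ) ^ n = 1 := by
    rw [← mul_pow]; norm_num
  have hR : W⁻¹ ^ n * (W ^ (n + n) + 1) = W ^ n + W⁻¹ ^ n := by
    rw [pow_add, mul_add, ← mul_assoc, inv_pow, inv_mul_cancel₀ (pow_ne_zero n hW0), one_mul, mul_one]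
  rw [hR]
  linear_combination (W ^ n + W⁻¹ ^ n) / 2 * 2 * hsign

theorem chebyshevT_product_eq_double_product_oddodd (m n : ℕ) (hm : 1 ≤ m) (hn : 1 ≤ n) :
    (-1 : ℂ) ^ (m * n) * 2 ^ m *
      ∏ h ∈ Finset.Icc 1 m,
        (Polynomial.Chebyshev.T ℂ (2 * n)).eval
          (Complex.I * (Real.cos ((2 * h - 1) * π / (4 * m)) : ℂ)) =
      ((∏ h ∈ Finset.Icc 1 m, ∏ k ∈ Finset.Icc 1 n,
        (4 * Real.cos ((2 * h - 1) * π / (4 * m)) ^ 2 +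
         4 * Real.cos ((2 * k - 1) * π / (4 * n)) ^ 2) : ℝ) : ℂ) := by
  rw [Complex.ofReal_prod]
  have main2 : ∏ h ∈ Finset.Icc 1 m,
      ((∏ k ∈ Finset.Icc 1 n,
        (4 * Real.cos ((2 * h - 1) * π / (4 * m)) ^ 2 +
         4 * Real.cos ((2 * k - 1) * π / (4 * n)) ^ 2) : ℝ) : ℂ)
      = ∏ h ∈ Finset.Icc 1 m, ((-1 : ℂ) ^ n * 2 *
          (Polynomial.Chebyshev.T ℂ (2 * n)).eval
            (Complex.I * (Real.cos ((2 * h - 1) * π / (4 * m)) : ℂ))) := by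
    refine Finset.prod_congr rfl fun h _ => ?_
    rw [Complex.ofReal_prod]
    exact (cheb_aux_t2 n hn _).symm
  rw [main2, Finset.prod_mul_distrib, Finset.prod_const, Nat.card_Icc]
  simp only [Nat.add_sub_cancel]
  rw [mul_pow, ← pow_mul, Nat.mul_comm n m]
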